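/- arXiv:2403.11860 — 3 statements merged into one kernel-verified Lean document; each statement's English description precedes it below -/
import Mathlib

section
/- For every θ ∈ ℝ, the Yeo–Johnson transformation satisfies lim_{t→+∞} Λ_θ(t) = +∞ and lim_{t→−∞} Λ_θ(t) = −∞ if and only if 0 ≤ θ ≤ 2; in particular, for θ ∈ [0,2] the map Λ_θ : ℝ → ℝ is a bijection. -/
open Filter Real Set

/-- The Yeo–Johnson transformation. -/
noncomputable def YJ (θ t : ℝ) : ℝ :=
  if 0 ≤ t then
    if θ = 0 then Real.log (t + 1) else ((t + 1) ^ θ - 1) / θ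
  else
    if θ = 2 then -Real.log (-t + 1) else -(((-t + 1) ^ (2 - θ) - 1) / (2 - θ))

lemma yj_zero (θ : ℝ) : YJ θ 0 = 0 := by
  simp [YJ, Real.one_rpow]

lemma yj_nonneg_eq (θ : ℝ) {t : ℝ} (ht : 0 ≤ t) :
    YJ θ t = if θ = 0 then Real.log (t + 1) else ((t + 1) ^ θ - 1) / θ :=
  if_pos ht

lemma yj_nonpos_eq (θ : ℝ) {t : ℝ} (ht : t ≤ 0) : YJ θ t = -YJ (2 - θ) (-t) := by
  rcases ht.lt_or_eq with ht' | rfl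
  · have h1 : ¬ (0 ≤ t) := not_le.mpr ht'
    have h2 : (0:ℝ) ≤ -t := by linarith
    rw [YJ, if_neg h1, yj_nonneg_eq _ h2]
    have : (2 - θ = 0) ↔ θ = 2 := by constructor <;> intro h <;> linarith
    by_cases hθ : θ = 2
    · simp [hθ]
    · rw [if_neg hθ, if_neg (fun h => hθ (this.mp h))]
  · simp [yj_zero]

lemma yj_strictMonoOn (θ : ℝ) : StrictMonoOn (YJ θ) (Ici 0) := by
  intro a ha b hb hab
  simp only [mem_Ici] at ha hb
  rw [yj_nonneg_eq _ ha, yj_nonneg_eq _ hb]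
  have h1 : (0:ℝ) < a + 1 := by linarith
  have h2 : a + 1 < b + 1 := by linarith
  by_cases hθ : θ = 0
  · simp only [if_pos hθ]
    exact Real.log_lt_log h1 h2
  · simp only [if_neg hθ]
    rcases lt_or_gt_of_ne hθ with hneg | hpos
    · have := Real.rpow_lt_rpow_of_neg h1 h2 hneg
      exact div_lt_div_of_neg_of_lt hneg (by linarith)
    · have := Real.rpow_lt_rpow h1.le h2 hpos
      exact (div_lt_div_iff_of_pos_right hpos).mpr (by linarith)

lemma yj_strictMono (θ : ℝ) : StrictMono (YJ θ) := by
  refine StrictMonoOn.Iic_union_Ici (a := 0) ?_ (yj_strictMonoOn θ)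
  intro a ha b hb hab
  simp only [mem_Iic] at ha hb
  rw [yj_nonpos_eq _ ha, yj_nonpos_eq _ hb, neg_lt_neg_iff]
  exact yj_strictMonoOn (2 - θ) (by simpa using hb) (by simpa using ha) (by linarith)

lemma yj_tendsto_atTop_iff (θ : ℝ) : Tendsto (YJ θ) atTop atTop ↔ 0 ≤ θ := by
  have hev : YJ θ =ᶠ[atTop]
      fun t => if θ = 0 then Real.log (t + 1) else ((t + 1) ^ θ - 1) / θ := by
    filter_upwards [eventually_ge_atTop (0:ℝ)] with t ht using yj_nonneg_eq θ ht
  rw [tendsto_congr' hev]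
  constructor
  · intro h
    by_contra hθ
    push_neg at hθ
    have hne : θ ≠ 0 := ne_of_lt hθ
    simp only [if_neg hne] at h
    have hlim : Tendsto (fun t : ℝ => ((t + 1) ^ θ - 1) / θ) atTop (nhds ((0 - 1) / θ)) := by
      have h0 : Tendsto (fun t : ℝ => (t + 1) ^ θ) atTop (nhds 0) := by
        have := (tendsto_rpow_neg_atTop (y := -θ) (by linarith)).comp
          (tendsto_atTop_add_const_right atTop (1:ℝ) tendsto_id)
        simpa [Function.comp_def] using this
      exact ((h0.sub tendsto_const_nhds).div_const θ)
    exact not_tendsto_atTop_of_tendsto_nhds hlim h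
  · intro hθ
    by_cases h0 : θ = 0
    · simp only [if_pos h0]
      exact Real.tendsto_log_atTop.comp (tendsto_atTop_add_const_right atTop 1 tendsto_id)
    · simp only [if_neg h0]
      have hpos : 0 < θ := lt_of_le_of_ne hθ (Ne.symm h0)
      have h1 : Tendsto (fun t : ℝ => (t + 1) ^ θ) atTop atTop :=
        (tendsto_rpow_atTop hpos).comp (tendsto_atTop_add_const_right atTop 1 tendsto_id)
      exact (tendsto_atTop_add_const_right atTop (-1) h1).atTop_div_const hpos

lemma yj_tendsto_atBot_iff (θ : ℝ) : Tendsto (YJ θ) atBot atBot ↔ θ ≤ 2 := by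
  have hev : YJ θ =ᶠ[atBot] fun t => -YJ (2 - θ) (-t) := by
    filter_upwards [eventually_le_atBot (0:ℝ)] with t ht using yj_nonpos_eq θ ht
  rw [tendsto_congr' hev]
  have key : Tendsto (fun t : ℝ => -YJ (2 - θ) (-t)) atBot atBot ↔
      Tendsto (YJ (2 - θ)) atTop atTop := by
    constructor
    · intro h
      have := (tendsto_neg_atBot_atTop.comp h).comp tendsto_neg_atTop_atBot
      simpa [Function.comp_def, neg_neg] using this
    · intro h
      exact tendsto_neg_atTop_atBot.comp (h.comp tendsto_neg_atBot_atTop)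
  rw [key, yj_tendsto_atTop_iff]
  constructor <;> intro h <;> linarith

lemma yj_continuous (θ : ℝ) (h0 : 0 ≤ θ) (h2 : θ ≤ 2) : Continuous (YJ θ) := by
  have : YJ θ = fun t => if (fun _ : ℝ => (0:ℝ)) t ≤ id t then
      (if θ = 0 then Real.log (t + 1) else ((t + 1) ^ θ - 1) / θ)
    else (if θ = 2 then -Real.log (-t + 1) else -(((-t + 1) ^ (2 - θ) - 1) / (2 - θ))) := rfl
  rw [this]
  refine continuous_if_le continuous_const continuous_id ?_ ?_ ?_
  · -- ContinuousOn on {x | 0 ≤ x}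
    by_cases hθ : θ = 0
    · simp only [if_pos hθ]
      intro x hx
      have : (0:ℝ) ≤ x := hx
      exact (ContinuousAt.log (by fun_prop) (by nlinarith : (0:ℝ) < x + 1).ne' : ContinuousAt (fun t : ℝ => Real.log (t + 1)) x).continuousWithinAt
    · simp only [if_neg hθ]
      have hpos : 0 < θ := lt_of_le_of_ne h0 (Ne.symm hθ)
      intro x _
      refine ContinuousAt.continuousWithinAt ?_
      have : ContinuousAt (fun t : ℝ => (t + 1) ^ θ) x :=
        (Real.continuousAt_rpow_const _ _ (Or.inr hpos.le)).comp (by fun_prop)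
      exact (this.sub continuousAt_const).div_const θ
  · -- ContinuousOn on {x | x ≤ 0}
    by_cases hθ : θ = 2
    · simp only [if_pos hθ]
      intro x hx
      have : x ≤ (0:ℝ) := hx
      refine ContinuousWithinAt.neg ?_
      exact (ContinuousAt.log (by fun_prop) (by nlinarith : (0:ℝ) < -x + 1).ne' : ContinuousAt (fun t : ℝ => Real.log (-t + 1)) x).continuousWithinAt
    · simp only [if_neg hθ]
      have hpos : 0 < 2 - θ := by
        rcases lt_or_eq_of_le h2 with h | h
        · linarith
        · exact absurd h hθ
      intro x _
      refine ContinuousAt.continuousWithinAt ?_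
      have : ContinuousAt (fun t : ℝ => (-t + 1) ^ (2 - θ)) x :=
        (Real.continuousAt_rpow_const _ _ (Or.inr hpos.le)).comp (by fun_prop)
      exact ((this.sub continuousAt_const).div_const (2 - θ)).neg
  · intro x hx
    have hx0 : x = 0 := hx.symm
    subst hx0
    have h1 : (if θ = 0 then Real.log (0 + 1) else ((0 + 1) ^ θ - 1) / θ) = 0 := by
      by_cases hθ : θ = 0 <;> simp [hθ, Real.one_rpow]
    have h2' : (if θ = 2 then -Real.log (-0 + 1) else -(((-0 + 1) ^ (2 - θ) - 1) / (2 - θ))) = 0 := by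
      by_cases hθ : θ = 2 <;> simp [hθ, Real.one_rpow]
    rw [h1, h2']

/-- `Λ_θ` tends to `±∞` at `±∞` if and only if `0 ≤ θ ≤ 2`; in particular for
`θ ∈ [0,2]` it is a bijection of ℝ. -/
theorem yj_tendsto_iff_and_bijective (θ : ℝ) :
    ((Filter.Tendsto (YJ θ) Filter.atTop Filter.atTop ∧
      Filter.Tendsto (YJ θ) Filter.atBot Filter.atBot) ↔ (0 ≤ θ ∧ θ ≤ 2)) ∧
    (0 ≤ θ → θ ≤ 2 → Function.Bijective (YJ θ)) := by
  constructor
  · rw [yj_tendsto_atTop_iff, yj_tendsto_atBot_iff]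
  · intro h0 h2
    refine ⟨(yj_strictMono θ).injective, ?_⟩
    exact (yj_continuous θ h0 h2).surjective ((yj_tendsto_atTop_iff θ).mpr h0)
      ((yj_tendsto_atBot_iff θ).mpr h2)
end

section
/- For 1 < θ ≤ 2 the Yeo–Johnson transformation Λ_θ is convex on ℝ, and for 0 ≤ θ < 1 it is concave on ℝ. -/
open Real Set

/-- The derivative of the Yeo–Johnson transformation. -/
noncomputable def yjD (θ t : ℝ) : ℝ :=
  if 0 ≤ t then (t + 1) ^ (θ - 1) else (-t + 1) ^ (1 - θ)

/-- The positive branch. -/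
noncomputable def yjP (θ t : ℝ) : ℝ :=
  if θ = 0 then Real.log (t + 1) else ((t + 1) ^ θ - 1) / θ

/-- The negative branch. -/
noncomputable def yjN (θ t : ℝ) : ℝ :=
  if θ = 2 then -Real.log (-t + 1) else -(((-t + 1) ^ (2 - θ) - 1) / (2 - θ))

lemma hasDerivAt_yjP (θ t : ℝ) (ht : -1 < t) :
    HasDerivAt (yjP θ) ((t + 1) ^ (θ - 1)) t := by
  have h1 : (0:ℝ) < t + 1 := by linarith
  have hd : HasDerivAt (fun t : ℝ => t + 1) 1 t := (hasDerivAt_id t).add_const 1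
  by_cases hθ : θ = 0
  · subst hθ
    have h := (Real.hasDerivAt_log h1.ne').comp t hd
    have : HasDerivAt (yjP 0) ((t + 1)⁻¹ * 1) t := by
      refine h.congr_of_eventuallyEq ?_
      filter_upwards with x
      simp [yjP]
    convert this using 1
    rw [show (0:ℝ) - 1 = -1 by ring, Real.rpow_neg_one]
    ring
  · have h := (Real.hasDerivAt_rpow_const (p := θ) (Or.inl h1.ne')).comp t hd
    have h2 : HasDerivAt (yjP θ) (θ * (t + 1) ^ (θ - 1) * 1 / θ) t := by
      refine ((h.sub_const 1).div_const θ).congr_of_eventuallyEq ?_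
      filter_upwards with x
      simp [yjP, hθ]
    convert h2 using 1
    field_simp

lemma hasDerivAt_yjN (θ t : ℝ) (ht : t < 1) :
    HasDerivAt (yjN θ) ((-t + 1) ^ (1 - θ)) t := by
  have h1 : (0:ℝ) < -t + 1 := by linarith
  have hd : HasDerivAt (fun t : ℝ => -t + 1) (-1) t := ((hasDerivAt_id t).neg).add_const 1
  by_cases hθ : θ = 2
  · subst hθ
    have h := ((Real.hasDerivAt_log h1.ne').comp t hd).neg
    have : HasDerivAt (yjN 2) (-((-t + 1)⁻¹ * -1)) t := by
      refine h.congr_of_eventuallyEq ?_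
      filter_upwards with x
      simp [yjN]
    convert this using 1
    rw [show (1:ℝ) - 2 = -1 by ring, Real.rpow_neg_one]
    ring
  · have h2θ : (2:ℝ) - θ ≠ 0 := by
      intro h; apply hθ; linarith
    have h := (Real.hasDerivAt_rpow_const (p := 2 - θ) (Or.inl h1.ne')).comp t hd
    have h2 : HasDerivAt (yjN θ) (-(((2 - θ) * (-t + 1) ^ (2 - θ - 1) * -1) / (2 - θ))) t := by
      refine (((h.sub_const 1).div_const (2 - θ)).neg).congr_of_eventuallyEq ?_
      filter_upwards with x
      simp [yjN, hθ]
    convert h2 using 1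
    rw [show (2:ℝ) - θ - 1 = 1 - θ by ring]
    field_simp

lemma yjP_zero (θ : ℝ) : yjP θ 0 = 0 := by
  unfold yjP
  split <;> simp

lemma yjN_zero (θ : ℝ) : yjN θ 0 = 0 := by
  unfold yjN
  split <;> simp

lemma yj_eq_pos (θ : ℝ) : EqOn (YJ θ) (yjP θ) (Ici 0) := by
  intro x hx
  simp only [YJ, yjP, if_pos (mem_Ici.mp hx)]

lemma yj_eq_neg (θ : ℝ) : EqOn (YJ θ) (yjN θ) (Iic 0) := by
  intro x hx
  rcases eq_or_lt_of_le (mem_Iic.mp hx) with h | h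
  · subst h
    rw [show YJ θ 0 = yjP θ 0 from yj_eq_pos θ (mem_Ici.mpr le_rfl), yjP_zero, yjN_zero]
  · simp only [YJ, yjN, if_neg (not_le.mpr h)]

lemma hasDerivAt_YJ (θ t : ℝ) : HasDerivAt (YJ θ) (yjD θ t) t := by
  rcases lt_trichotomy t 0 with h | h | h
  · have hD : yjD θ t = (-t + 1) ^ (1 - θ) := by simp [yjD, not_le.mpr h]
    rw [hD]
    refine (hasDerivAt_yjN θ t (by linarith)).congr_of_eventuallyEq ?_
    filter_upwards [Iio_mem_nhds h] with x hx
    exact yj_eq_neg θ (mem_Iic.mpr (le_of_lt hx))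
  · subst h
    have hD : yjD θ 0 = 1 := by simp [yjD]
    rw [hD]
    have hP : HasDerivWithinAt (YJ θ) 1 (Ici 0) 0 := by
      have := (hasDerivAt_yjP θ 0 (by norm_num)).hasDerivWithinAt (s := Ici 0)
      simp only [zero_add, Real.one_rpow] at this
      exact this.congr (yj_eq_pos θ) (yj_eq_pos θ (mem_Ici.mpr le_rfl))
    have hN : HasDerivWithinAt (YJ θ) 1 (Iic 0) 0 := by
      have := (hasDerivAt_yjN θ 0 (by norm_num)).hasDerivWithinAt (s := Iic 0)
      simp only [neg_zero, zero_add, Real.one_rpow] at this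
      exact this.congr (yj_eq_neg θ) (yj_eq_neg θ (mem_Iic.mpr le_rfl))
    have := hN.union hP
    rw [Iic_union_Ici] at this
    exact hasDerivWithinAt_univ.mp this
  · have hD : yjD θ t = (t + 1) ^ (θ - 1) := by simp [yjD, le_of_lt h]
    rw [hD]
    refine (hasDerivAt_yjP θ t (by linarith)).congr_of_eventuallyEq ?_
    filter_upwards [Ioi_mem_nhds h] with x hx
    exact yj_eq_pos θ (mem_Ici.mpr (le_of_lt hx))

lemma yjD_mono (θ : ℝ) (hθ : 1 ≤ θ) : Monotone (yjD θ) := by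
  intro a b hab
  unfold yjD
  by_cases ha : 0 ≤ a
  · have hb : 0 ≤ b := le_trans ha hab
    rw [if_pos ha, if_pos hb]
    exact Real.rpow_le_rpow (by linarith) (by linarith) (by linarith)
  · rw [if_neg ha]
    push_neg at ha
    by_cases hb : 0 ≤ b
    · rw [if_pos hb]
      calc (-a + 1) ^ (1 - θ) ≤ 1 :=
            Real.rpow_le_one_of_one_le_of_nonpos (by linarith) (by linarith)
        _ ≤ (b + 1) ^ (θ - 1) := Real.one_le_rpow (by linarith) (by linarith)
    · rw [if_neg hb]
      push_neg at hb
      exact Real.rpow_le_rpow_of_nonpos (by linarith) (by linarith) (by linarith)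

lemma yjD_anti (θ : ℝ) (hθ : θ ≤ 1) : Antitone (yjD θ) := by
  intro a b hab
  unfold yjD
  by_cases ha : 0 ≤ a
  · have hb : 0 ≤ b := le_trans ha hab
    rw [if_pos ha, if_pos hb]
    exact Real.rpow_le_rpow_of_nonpos (by linarith) (by linarith) (by linarith)
  · rw [if_neg ha]
    push_neg at ha
    by_cases hb : 0 ≤ b
    · rw [if_pos hb]
      calc (b + 1) ^ (θ - 1) ≤ 1 :=
            Real.rpow_le_one_of_one_le_of_nonpos (by linarith) (by linarith)
        _ ≤ (-a + 1) ^ (1 - θ) := Real.one_le_rpow (by linarith) (by linarith)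
    · rw [if_neg hb]
      push_neg at hb
      exact Real.rpow_le_rpow (by linarith) (by linarith) (by linarith)

lemma yj_deriv (θ : ℝ) : deriv (YJ θ) = yjD θ :=
  funext fun t => (hasDerivAt_YJ θ t).deriv

lemma yj_diff (θ : ℝ) : Differentiable ℝ (YJ θ) :=
  fun t => (hasDerivAt_YJ θ t).differentiableAt

/-- For `1 < θ ≤ 2` the Yeo–Johnson transformation is convex on ℝ, and for
`0 ≤ θ < 1` it is concave on ℝ. -/
theorem yj_convex_concave (θ : ℝ) :
    (1 < θ → θ ≤ 2 → ConvexOn ℝ Set.univ (YJ θ)) ∧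
    (0 ≤ θ → θ < 1 → ConcaveOn ℝ Set.univ (YJ θ)) := by
  constructor
  · intro h1 _
    exact Monotone.convexOn_univ_of_deriv (yj_diff θ)
      (by rw [yj_deriv]; exact yjD_mono θ h1.le)
  · intro _ h1
    exact Antitone.concaveOn_univ_of_deriv (yj_diff θ)
      (by rw [yj_deriv]; exact yjD_anti θ h1.le)
end

section
/- Let K_{θ,μ,σ}(t) = exp(−((Λ_θ(t)−μ)/σ)²/2)·Λ'_θ(t), where Λ_θ is the Yeo–Johnson transformation. If θ₁ ≠ θ₂ with θ₁, θ₂ ∈ [0,2], then for any μ₁, μ₂ ∈ ℝ and σ₁, σ₂ > 0, the limit as t → +∞ of K_{θ₁,μ₁,σ₁}(t)/K_{θ₂,μ₂,σ₂}(t) is either 0 or +∞. -/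
/-- The derivative of the Yeo–Johnson transformation. -/
noncomputable def YJderiv (θ t : ℝ) : ℝ :=
  if 0 ≤ t then (t + 1) ^ (θ - 1) else (1 - t) ^ (1 - θ)

/-- The function `K_{θ,μ,σ}` from Assumption (A7). -/
noncomputable def Kfun (θ μ σ t : ℝ) : ℝ :=
  Real.exp (-(1 / 2) * ((YJ θ t - μ) / σ) ^ 2) * YJderiv θ t

open Filter Real in
/-- Auxiliary: the log of the ratio tends to `+∞` when `θ₁ < θ₂`. -/
lemma auxF (θ₁ θ₂ μ₁ μ₂ σ₁ σ₂ : ℝ) (h0 : 0 ≤ θ₁) (hlt : θ₁ < θ₂)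
    (hσ₁ : 0 < σ₁) (hσ₂ : 0 < σ₂) :
    Tendsto (fun t => (1/2) * ((YJ θ₂ t - μ₂) / σ₂) ^ 2
      - (1/2) * ((YJ θ₁ t - μ₁) / σ₁) ^ 2 + (θ₁ - θ₂) * Real.log (t + 1))
      atTop atTop := by
  have hθ₂ : 0 < θ₂ := lt_of_le_of_lt h0 hlt
  set L₁ : ℝ → ℝ := fun s => if θ₁ = 0 then Real.log s else (s ^ θ₁ - 1) / θ₁ with hL₁def
  -- basic limits in the variable `s`
  have hd : Tendsto (fun s : ℝ => (s ^ θ₂)⁻¹) atTop (nhds 0) :=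
    (tendsto_rpow_atTop hθ₂).inv_tendsto_atTop
  have hc : Tendsto (fun s : ℝ => Real.log s / s ^ θ₂) atTop (nhds 0) :=
    (isLittleO_log_rpow_atTop hθ₂).tendsto_div_nhds_zero
  have ha : Tendsto (fun s : ℝ => ((s ^ θ₂ - 1) / θ₂ - μ₂) / s ^ θ₂) atTop (nhds (1/θ₂)) := by
    have h1 : Tendsto (fun s : ℝ => (1 - (s ^ θ₂)⁻¹) / θ₂ - μ₂ * (s ^ θ₂)⁻¹) atTop
        (nhds ((1 - 0) / θ₂ - μ₂ * 0)) :=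
      ((tendsto_const_nhds.sub hd).div_const θ₂).sub (hd.const_mul μ₂)
    have h2 : ∀ᶠ s : ℝ in atTop,
        (1 - (s ^ θ₂)⁻¹) / θ₂ - μ₂ * (s ^ θ₂)⁻¹ = ((s ^ θ₂ - 1) / θ₂ - μ₂) / s ^ θ₂ := by
      filter_upwards [eventually_ge_atTop (1 : ℝ)] with s hs
      have hN : (0:ℝ) < s ^ θ₂ := Real.rpow_pos_of_pos (by linarith) _
      field_simp
    simpa using h1.congr' h2
  have hb : Tendsto (fun s : ℝ => (L₁ s - μ₁) / s ^ θ₂) atTop (nhds 0) := by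
    have hL : Tendsto (fun s : ℝ => L₁ s / s ^ θ₂) atTop (nhds 0) := by
      rcases eq_or_lt_of_le h0 with h00 | h00
      · have : L₁ = fun s => Real.log s := by
          ext s; simp [hL₁def, h00.symm]
        rw [this]; exact hc
      · have hne : θ₁ ≠ 0 := ne_of_gt h00
        have he : Tendsto (fun s : ℝ => s ^ (θ₁ - θ₂)) atTop (nhds 0) := by
          have := tendsto_rpow_neg_atTop (sub_pos.2 hlt)
          simpa [neg_sub] using this
        have h1 : Tendsto (fun s : ℝ => (s ^ (θ₁ - θ₂) - (s ^ θ₂)⁻¹) / θ₁) atTop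
            (nhds ((0 - 0) / θ₁)) := (he.sub hd).div_const θ₁
        have h2 : ∀ᶠ s : ℝ in atTop,
            (s ^ (θ₁ - θ₂) - (s ^ θ₂)⁻¹) / θ₁ = L₁ s / s ^ θ₂ := by
          filter_upwards [eventually_ge_atTop (1 : ℝ)] with s hs
          have hs0 : (0:ℝ) < s := by linarith
          have hN : (0:ℝ) < s ^ θ₂ := Real.rpow_pos_of_pos hs0 _
          have hsub : s ^ (θ₁ - θ₂) = s ^ θ₁ / s ^ θ₂ := Real.rpow_sub hs0 _ _
          simp only [hL₁def, if_neg hne]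
          rw [hsub]
          field_simp
        simpa using h1.congr' h2
    have h1 : Tendsto (fun s : ℝ => L₁ s / s ^ θ₂ - μ₁ * (s ^ θ₂)⁻¹) atTop
        (nhds (0 - μ₁ * 0)) := hL.sub (hd.const_mul μ₁)
    have h2 : ∀ s : ℝ, L₁ s / s ^ θ₂ - μ₁ * (s ^ θ₂)⁻¹ = (L₁ s - μ₁) / s ^ θ₂ := by
      intro s
      simp only [sub_div, div_eq_mul_inv]
      ring
    simpa using h1.congr h2
  -- the normalized quantity tends to a positive constant
  set c₀ : ℝ := 1 / (2 * σ₂ ^ 2) * (1/θ₂) ^ 2 with hc₀def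
  have hc₀ : 0 < c₀ := by positivity
  have hG : Tendsto (fun s : ℝ =>
      1 / (2 * σ₂ ^ 2) * (((s ^ θ₂ - 1) / θ₂ - μ₂) / s ^ θ₂) ^ 2
      - 1 / (2 * σ₁ ^ 2) * ((L₁ s - μ₁) / s ^ θ₂) ^ 2
      + (θ₁ - θ₂) * (Real.log s / s ^ θ₂) * (s ^ θ₂)⁻¹) atTop (nhds c₀) := by
    have := (((ha.pow 2).const_mul (1 / (2 * σ₂ ^ 2))).sub
      ((hb.pow 2).const_mul (1 / (2 * σ₁ ^ 2)))).add ((hc.const_mul (θ₁ - θ₂)).mul hd)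
    simpa [hc₀def] using this
  have hN2 : Tendsto (fun s : ℝ => (s ^ θ₂) ^ 2) atTop atTop :=
    (tendsto_pow_atTop two_ne_zero).comp (tendsto_rpow_atTop hθ₂)
  have hFs : Tendsto (fun s : ℝ =>
      (1/2) * (((s ^ θ₂ - 1) / θ₂ - μ₂) / σ₂) ^ 2
      - (1/2) * ((L₁ s - μ₁) / σ₁) ^ 2 + (θ₁ - θ₂) * Real.log s) atTop atTop := by
    refine Tendsto.congr' ?_ (hG.pos_mul_atTop hc₀ hN2)
    filter_upwards [eventually_ge_atTop (1 : ℝ)] with s hs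
    have hs0 : (0:ℝ) < s := by linarith
    have hN : (0:ℝ) < s ^ θ₂ := Real.rpow_pos_of_pos hs0 _
    field_simp
  have hcomp : Tendsto (fun t : ℝ =>
      (1/2) * ((((t + 1) ^ θ₂ - 1) / θ₂ - μ₂) / σ₂) ^ 2
      - (1/2) * ((L₁ (t + 1) - μ₁) / σ₁) ^ 2 + (θ₁ - θ₂) * Real.log (t + 1))
      atTop atTop :=
    hFs.comp (tendsto_atTop_add_const_right atTop 1 tendsto_id)
  refine Tendsto.congr' ?_ hcomp
  filter_upwards [eventually_ge_atTop (0 : ℝ)] with t ht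
  have hY₂ : YJ θ₂ t = ((t + 1) ^ θ₂ - 1) / θ₂ := by
    simp [YJ, if_pos ht, ne_of_gt hθ₂]
  have hY₁ : YJ θ₁ t = L₁ (t + 1) := by
    by_cases h00 : θ₁ = 0 <;> simp [YJ, if_pos ht, hL₁def, h00]
  rw [hY₂, hY₁]

open Filter Real in
/-- Auxiliary: on `t ≥ 0` the ratio of `Kfun`s is the exponential of the log-ratio. -/
lemma Kfun_ratio_eq (θ₁ θ₂ μ₁ μ₂ σ₁ σ₂ t : ℝ) (ht : 0 ≤ t) :
    Kfun θ₁ μ₁ σ₁ t / Kfun θ₂ μ₂ σ₂ t =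
      Real.exp ((1/2) * ((YJ θ₂ t - μ₂) / σ₂) ^ 2
        - (1/2) * ((YJ θ₁ t - μ₁) / σ₁) ^ 2 + (θ₁ - θ₂) * Real.log (t + 1)) := by
  have hp : (0:ℝ) < t + 1 := by linarith
  rw [Kfun, Kfun, YJderiv, YJderiv, if_pos ht, if_pos ht, mul_div_mul_comm,
    ← Real.exp_sub, ← Real.rpow_sub hp,
    show θ₁ - 1 - (θ₂ - 1) = θ₁ - θ₂ by ring,
    Real.rpow_def_of_pos hp, ← Real.exp_add]
  congr 1
  rw [Real.log]
  ring

/-- If `θ₁ ≠ θ₂` with `θ₁, θ₂ ∈ [0,2]`, then the ratio `K_{θ₁,μ₁,σ₁}/K_{θ₂,μ₂,σ₂}`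
tends to 0 or to +∞ as `t → +∞`. -/
theorem Kfun_ratio_tendsto_atTop (θ₁ θ₂ μ₁ μ₂ σ₁ σ₂ : ℝ)
    (hθ₁ : θ₁ ∈ Set.Icc (0 : ℝ) 2) (hθ₂ : θ₂ ∈ Set.Icc (0 : ℝ) 2)
    (hne : θ₁ ≠ θ₂) (hσ₁ : 0 < σ₁) (hσ₂ : 0 < σ₂) :
    Filter.Tendsto (fun t => Kfun θ₁ μ₁ σ₁ t / Kfun θ₂ μ₂ σ₂ t) Filter.atTop (nhds 0) ∨
    Filter.Tendsto (fun t => Kfun θ₁ μ₁ σ₁ t / Kfun θ₂ μ₂ σ₂ t) Filter.atTop Filter.atTop := by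
  have heq : ∀ᶠ t : ℝ in Filter.atTop,
      Real.exp ((1/2) * ((YJ θ₂ t - μ₂) / σ₂) ^ 2
        - (1/2) * ((YJ θ₁ t - μ₁) / σ₁) ^ 2 + (θ₁ - θ₂) * Real.log (t + 1))
      = Kfun θ₁ μ₁ σ₁ t / Kfun θ₂ μ₂ σ₂ t := by
    filter_upwards [Filter.eventually_ge_atTop (0 : ℝ)] with t ht
    exact (Kfun_ratio_eq θ₁ θ₂ μ₁ μ₂ σ₁ σ₂ t ht).symm
  rcases lt_or_gt_of_ne hne with h | h
  · right
    have hF := auxF θ₁ θ₂ μ₁ μ₂ σ₁ σ₂ hθ₁.1 h hσ₁ hσ₂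
    exact (Real.tendsto_exp_atTop.comp hF).congr' heq
  · left
    have hF := auxF θ₂ θ₁ μ₂ μ₁ σ₂ σ₁ hθ₂.1 h hσ₂ hσ₁
    have hFb : Filter.Tendsto (fun t : ℝ =>
        (1/2) * ((YJ θ₂ t - μ₂) / σ₂) ^ 2
        - (1/2) * ((YJ θ₁ t - μ₁) / σ₁) ^ 2 + (θ₁ - θ₂) * Real.log (t + 1))
        Filter.atTop Filter.atBot := by
      rw [Filter.tendsto_atBot]
      intro b
      filter_upwards [Filter.tendsto_atTop.mp hF (-b)] with t htb
      nlinarith [htb]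
    exact (Real.tendsto_exp_atBot.comp hFb).congr' heq
end
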